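/- Let A be a real m × n matrix, b ∈ ℝᵐ, λ > 0, a > 0, and 0 < μ < 1/‖A‖₂², where ‖A‖₂ is the operator (spectral) norm of A. Let B_μ(z) = z + μ Aᵀ(b − Az) and let ∇₊ denote the componentwise positive part. If x* ≥ 0 is a global minimizer over {x ∈ ℝⁿ : x ≥ 0} of x ↦ ‖Ax − b‖₂² + λ P_a(x), then x* is a global minimizer over all of ℝⁿ of x ↦ ‖x − ∇₊(B_μ(x*))‖₂² + λμ P_a(x). -/

import Mathlib

open Matrix Filter Topology

noncomputable def rho (a t : ℝ) : ℝ := a * |t| / (a * |t| + 1)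

noncomputable def Pa {n : ℕ} (a : ℝ) (x : Fin n → ℝ) : ℝ := ∑ i, rho a (x i)

open scoped Classical in
noncomputable def l0 {n : ℕ} (x : Fin n → ℝ) : ℕ :=
  (Finset.univ.filter fun i => x i ≠ 0).card

def SOL {m n : ℕ} (A : Matrix (Fin m) (Fin n) ℝ) (b : Fin m → ℝ) : Set (Fin n → ℝ) :=
  {x | A.mulVec x = b ∧ 0 ≤ x}

noncomputable def sqN {n : ℕ} (v : Fin n → ℝ) : ℝ := ∑ i, (v i) ^ 2

def projPos {n : ℕ} (v : Fin n → ℝ) : Fin n → ℝ := fun i => max 0 (v i)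

noncomputable def C1 {m n : ℕ} (A : Matrix (Fin m) (Fin n) ℝ) (b : Fin m → ℝ)
    (lam a : ℝ) (x : Fin n → ℝ) : ℝ :=
  sqN (A.mulVec x - b) + lam * Pa a x

noncomputable def C2 {m n : ℕ} (A : Matrix (Fin m) (Fin n) ℝ) (b : Fin m → ℝ)
    (lam a mu : ℝ) (x z : Fin n → ℝ) : ℝ :=
  mu * (C1 A b lam a x - sqN (A.mulVec x - A.mulVec z)) + sqN (x - z)

noncomputable def Bmu {m n : ℕ} (A : Matrix (Fin m) (Fin n) ℝ) (b : Fin m → ℝ)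
    (mu : ℝ) (z : Fin n → ℝ) : Fin n → ℝ :=
  z + mu • (Aᵀ.mulVec (b - A.mulVec z))

/- ### auxiliary lemmas -/

lemma rho_nonneg {a : ℝ} (ha : 0 < a) (t : ℝ) : 0 ≤ rho a t := by
  unfold rho
  have h1 : 0 ≤ a * |t| := mul_nonneg ha.le (abs_nonneg t)
  positivity

lemma rho_mono {a : ℝ} (ha : 0 < a) {s t : ℝ} (h : |s| ≤ |t|) : rho a s ≤ rho a t := by
  unfold rho
  have hs : 0 ≤ a * |s| := mul_nonneg ha.le (abs_nonneg s)
  have ht : 0 ≤ a * |t| := mul_nonneg ha.le (abs_nonneg t)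
  rw [div_le_div_iff₀ (by linarith) (by linarith)]
  have : a * |s| ≤ a * |t| := mul_le_mul_of_nonneg_left h ha.le
  nlinarith

lemma sqN_eq_dot {n : ℕ} (v : Fin n → ℝ) : sqN v = v ⬝ᵥ v := by
  simp [sqN, dotProduct, sq]

lemma sqN_eq_norm_sq {k : ℕ} (w : Fin k → ℝ) :
    sqN w = ‖(EuclideanSpace.equiv (Fin k) ℝ).symm w‖ ^ 2 := by
  rw [EuclideanSpace.norm_eq, Real.sq_sqrt (by positivity)]
  simp [sqN, sq_abs]

open scoped Matrix.Norms.L2Operator in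
lemma mu_sqN_mulVec_le {m n : ℕ} (A : Matrix (Fin m) (Fin n) ℝ) {mu : ℝ}
    (hmu : 0 < mu) (hmu2 : mu < 1 / ‖A‖ ^ 2) (v : Fin n → ℝ) :
    mu * sqN (A.mulVec v) ≤ sqN v := by
  have hA2 : 0 < ‖A‖ ^ 2 := by
    rcases lt_or_eq_of_le (by positivity : (0:ℝ) ≤ ‖A‖ ^ 2) with h | h
    · exact h
    · rw [← h, div_zero] at hmu2; linarith
  have hb : ‖(EuclideanSpace.equiv (Fin m) ℝ).symm (A.mulVec v)‖ ≤
      ‖A‖ * ‖(EuclideanSpace.equiv (Fin n) ℝ).symm v‖ := A.l2_opNorm_mulVec _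
  have h1 : sqN (A.mulVec v) ≤ ‖A‖ ^ 2 * sqN v := by
    rw [sqN_eq_norm_sq, sqN_eq_norm_sq]
    calc ‖(EuclideanSpace.equiv (Fin m) ℝ).symm (A.mulVec v)‖ ^ 2
        ≤ (‖A‖ * ‖(EuclideanSpace.equiv (Fin n) ℝ).symm v‖) ^ 2 := by
          apply sq_le_sq' _ hb; nlinarith [norm_nonneg ((EuclideanSpace.equiv (Fin m) ℝ).symm (A.mulVec v))]
      _ = ‖A‖ ^ 2 * ‖(EuclideanSpace.equiv (Fin n) ℝ).symm v‖ ^ 2 := by ring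
  have hmuA : mu * ‖A‖ ^ 2 ≤ 1 := le_of_lt ((lt_div_iff₀ hA2).mp hmu2)
  have hv : 0 ≤ sqN v := by rw [sqN_eq_norm_sq]; positivity
  calc mu * sqN (A.mulVec v) ≤ mu * (‖A‖ ^ 2 * sqN v) := by
        exact mul_le_mul_of_nonneg_left h1 hmu.le
    _ = (mu * ‖A‖ ^ 2) * sqN v := by ring
    _ ≤ 1 * sqN v := mul_le_mul_of_nonneg_right hmuA hv
    _ = sqN v := one_mul _

lemma key_identity {m n : ℕ} (A : Matrix (Fin m) (Fin n) ℝ) (b : Fin m → ℝ)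
    (lam a mu : ℝ) (xstar y : Fin n → ℝ) :
    sqN (y - Bmu A b mu xstar) + lam * mu * Pa a y =
      mu * C1 A b lam a y - mu * sqN (A.mulVec (y - xstar)) + sqN (y - xstar)
      + mu ^ 2 * sqN (Aᵀ.mulVec (b - A.mulVec xstar)) - mu * sqN (A.mulVec xstar - b) := by
  have h1 : y - Bmu A b mu xstar = (y - xstar) - mu • (Aᵀ.mulVec (b - A.mulVec xstar)) := by
    funext i; simp [Bmu]; ring
  have h2 : A.mulVec y - b = A.mulVec (y - xstar) + (A.mulVec xstar - b) := by
    rw [Matrix.mulVec_sub]; abel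
  have hadj : (y - xstar) ⬝ᵥ (Aᵀ.mulVec (b - A.mulVec xstar)) =
      (A.mulVec (y - xstar)) ⬝ᵥ (b - A.mulVec xstar) := by
    rw [dotProduct_mulVec, vecMul_transpose]
  have f1 : mu * ((A.mulVec xstar) ⬝ᵥ (A.mulVec (y - xstar)))
      - mu * (b ⬝ᵥ (A.mulVec (y - xstar)))
      = -(mu * ((y - xstar) ⬝ᵥ (Aᵀ.mulVec (b - A.mulVec xstar)))) := by
    rw [hadj, dotProduct_sub, dotProduct_comm (A.mulVec xstar), dotProduct_comm b]
    ring
  have f2 : mu * ((A.mulVec (y - xstar)) ⬝ᵥ (A.mulVec xstar))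
      - mu * ((A.mulVec (y - xstar)) ⬝ᵥ b)
      = -(mu * ((y - xstar) ⬝ᵥ (Aᵀ.mulVec (b - A.mulVec xstar)))) := by
    rw [hadj, dotProduct_sub]; ring
  have f3 : mu * ((Aᵀ.mulVec (b - A.mulVec xstar)) ⬝ᵥ (y - xstar))
      = mu * ((y - xstar) ⬝ᵥ (Aᵀ.mulVec (b - A.mulVec xstar))) := by
    rw [dotProduct_comm]
  have f4 : mu * (b ⬝ᵥ (A.mulVec xstar)) = mu * ((A.mulVec xstar) ⬝ᵥ b) := by
    rw [dotProduct_comm]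
  rw [C1, h1, h2]
  simp only [sqN_eq_dot, Matrix.mulVec_sub, sub_dotProduct, dotProduct_sub, add_dotProduct,
    dotProduct_add, smul_dotProduct, dotProduct_smul, smul_eq_mul, mul_sub, mul_add, neg_sub]
  simp only [Matrix.mulVec_sub, sub_dotProduct, dotProduct_sub, mul_sub, mul_add, neg_sub]
    at f1 f2 f3 f4
  linarith [f1, f2, f3, f4]

open scoped Matrix.Norms.L2Operator in
lemma gtilde_min {m n : ℕ} (A : Matrix (Fin m) (Fin n) ℝ) (b : Fin m → ℝ)
    (lam a mu : ℝ) (hmu : 0 < mu) (hmu2 : mu < 1 / ‖A‖ ^ 2)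
    (xstar : Fin n → ℝ)
    (hmin : ∀ x : Fin n → ℝ, 0 ≤ x → C1 A b lam a xstar ≤ C1 A b lam a x)
    (y : Fin n → ℝ) (hy : 0 ≤ y) :
    sqN (xstar - Bmu A b mu xstar) + lam * mu * Pa a xstar ≤
      sqN (y - Bmu A b mu xstar) + lam * mu * Pa a y := by
  have Hy := key_identity A b lam a mu xstar y
  have Hx := key_identity A b lam a mu xstar xstar
  have hz : sqN (xstar - xstar) = 0 := by simp [sqN]
  have hz2 : sqN (A.mulVec (xstar - xstar)) = 0 := by simp [sqN, Matrix.mulVec_zero]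
  rw [hz, hz2] at Hx
  have h1 : mu * C1 A b lam a xstar ≤ mu * C1 A b lam a y :=
    mul_le_mul_of_nonneg_left (hmin y hy) hmu.le
  have h2 : mu * sqN (A.mulVec (y - xstar)) ≤ sqN (y - xstar) :=
    mu_sqN_mulVec_le A hmu hmu2 (y - xstar)
  linarith

open scoped Matrix.Norms.L2Operator in
theorem stmt16 {m n : ℕ} (A : Matrix (Fin m) (Fin n) ℝ) (b : Fin m → ℝ)
    (lam a mu : ℝ) (hl : 0 < lam) (ha : 0 < a)
    (hmu : 0 < mu) (hmu2 : mu < 1 / ‖A‖ ^ 2)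
    (xstar : Fin n → ℝ) (hxs : 0 ≤ xstar)
    (hmin : ∀ x : Fin n → ℝ, 0 ≤ x → C1 A b lam a xstar ≤ C1 A b lam a x) :
    ∀ x : Fin n → ℝ,
      sqN (xstar - projPos (Bmu A b mu xstar)) + lam * mu * Pa a xstar ≤
        sqN (x - projPos (Bmu A b mu xstar)) + lam * mu * Pa a x := by
  intro x
  classical
  set B : Fin n → ℝ := Bmu A b mu xstar with hB
  have hlm : 0 ≤ lam * mu := by positivity
  set x' : Fin n → ℝ := fun i => if 0 ≤ B i then max 0 (x i) else 0 with hx'def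
  have hx' : 0 ≤ x' := by
    intro i; simp only [hx'def]; split
    · exact le_max_left 0 (x i)
    · exact le_refl 0
  have G := gtilde_min A b lam a mu hmu hmu2 xstar hmin x' hx'
  set q : Fin n → ℝ := fun i => if 0 ≤ B i then 0 else (B i) ^ 2 with hq
  have SA : sqN (xstar - projPos B) + ∑ i, q i ≤ sqN (xstar - B) := by
    unfold sqN
    rw [← Finset.sum_add_distrib]
    apply Finset.sum_le_sum
    intro i _
    simp only [Pi.sub_apply, projPos, hq]
    have hxi : 0 ≤ xstar i := hxs i
    by_cases h : 0 ≤ B i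
    · simp [h, max_eq_right h]
    · have hlt : B i < 0 := lt_of_not_ge h
      simp only [if_neg h, max_eq_left hlt.le]
      nlinarith
  have SB : sqN (x' - B) + lam * mu * Pa a x' ≤
      sqN (x - projPos B) + lam * mu * Pa a x + ∑ i, q i := by
    unfold sqN Pa
    rw [Finset.mul_sum, Finset.mul_sum, ← Finset.sum_add_distrib,
      ← Finset.sum_add_distrib, ← Finset.sum_add_distrib]
    apply Finset.sum_le_sum
    intro i _
    simp only [Pi.sub_apply, projPos, hq, hx'def]
    by_cases h : 0 ≤ B i
    · simp only [h, if_pos]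
      rw [max_eq_right h]
      have hr : rho a (max 0 (x i)) ≤ rho a (x i) := by
        apply rho_mono ha
        rw [abs_of_nonneg (le_max_left 0 (x i))]
        exact max_le (abs_nonneg (x i)) (le_abs_self (x i))
      have hsq : (max 0 (x i) - B i) ^ 2 ≤ (x i - B i) ^ 2 := by
        rcases le_or_gt 0 (x i) with hx0 | hx0
        · rw [max_eq_right hx0]
        · rw [max_eq_left hx0.le]; nlinarith
      have := mul_le_mul_of_nonneg_left hr hlm
      linarith
    · have hlt : B i < 0 := lt_of_not_ge h
      simp only [if_neg h, max_eq_left hlt.le]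
      have h1 : rho a (0:ℝ) = 0 := by simp [rho]
      have h2 : 0 ≤ rho a (x i) := rho_nonneg ha (x i)
      have := mul_le_mul_of_nonneg_left h2 hlm
      nlinarith
  linarith [G, SA, SB]
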